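/- A ℤ_p-valued measure μ on ℤ_p is supported on ℤ_p^× (i.e. Res_{ℤ_p^×}(μ) = μ) if and only if ψ(A_μ) = 0, where A_μ ∈ ℤ_p[[T]] is the Mahler transform of μ and ψ is the unique operator on power series satisfying φ∘ψ(F)(T) = p^{-1} Σ_{ξ∈μ_p} F((1+T)ξ - 1). -/

import Mathlib

open Filter Finset
open scoped fwdDiff Topology

variable (p : ℕ) [Fact p.Prime]

lemma descPoch_smeval_prod (n : ℕ) (x : ℤ_[p]) :
    (descPochhammer ℤ n).smeval x = ∏ i ∈ Finset.range n, (x - (i : ℤ_[p])) := by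
  induction n with
  | zero => simp [Polynomial.smeval_one]
  | succ n ih =>
    rw [descPochhammer_succ_right, Polynomial.smeval_mul, ih, Finset.prod_range_succ,
      Polynomial.smeval_sub, Polynomial.smeval_X, Polynomial.smeval_natCast]
    simp

lemma B_eq_choose (B : ℕ → C(ℤ_[p], ℤ_[p]))
    (hB : ∀ (n : ℕ) (x : ℤ_[p]),
      (n.factorial : ℤ_[p]) * B n x = ∏ i ∈ Finset.range n, (x - (i : ℤ_[p])))
    (n : ℕ) (x : ℤ_[p]) : B n x = Ring.choose x n := by
  have h0 : (n.factorial : ℤ_[p]) ≠ 0 := Nat.cast_ne_zero.mpr n.factorial_ne_zero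
  apply mul_left_cancel₀ h0
  rw [hB n x, ← descPoch_smeval_prod, Ring.descPochhammer_eq_factorial_smul_choose,
    nsmul_eq_mul]


lemma fwdDiff_coe' (n : ℕ) (f : ℤ_[p] → ℤ_[p]) (x : ℤ_[p]) :
    (fwdDiff (1:ℤ_[p]))^[n] (fun y ↦ ((f y : ℚ_[p]))) x
      = ((fwdDiff (1:ℤ_[p]))^[n] f x : ℤ_[p]) := by
  induction n generalizing f x with
  | zero => simp
  | succ n ih =>
    rw [Function.iterate_succ_apply, Function.iterate_succ_apply]
    have h : fwdDiff (1:ℤ_[p]) (fun y ↦ ((f y : ℚ_[p])))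
        = fun y ↦ ((fwdDiff (1:ℤ_[p]) f y : ℤ_[p]) : ℚ_[p]) := by
      funext y
      simp [fwdDiff, PadicInt.coe_sub]
    rw [h, ih]

noncomputable def iotaC (g : C(ℤ_[p], ℤ_[p])) : C(ℤ_[p], ℚ_[p]) :=
  ⟨fun x => (g x : ℚ_[p]), continuous_induced_dom.comp g.continuous⟩

lemma iotaC_norm (g : C(ℤ_[p], ℤ_[p])) : ‖iotaC p g‖ = ‖g‖ := by
  apply le_antisymm
  · rw [ContinuousMap.norm_le_of_nonempty]
    intro x
    exact le_trans (le_of_eq (PadicInt.norm_def).symm) (g.norm_coe_le_norm x)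
  · rw [ContinuousMap.norm_le_of_nonempty]
    intro x
    exact le_trans (le_of_eq PadicInt.norm_def) ((iotaC p g).norm_coe_le_norm x)

lemma coe_finset_sum (s : Finset ℕ) (g : ℕ → ℤ_[p]) :
    ((∑ n ∈ s, g n : ℤ_[p]) : ℚ_[p]) = ∑ n ∈ s, ((g n : ℤ_[p]) : ℚ_[p]) :=
  map_sum (PadicInt.Coe.ringHom) g s

lemma iotaC_sub (g h : C(ℤ_[p], ℤ_[p])) : iotaC p (g - h) = iotaC p g - iotaC p h := by
  ext x
  simp [iotaC, PadicInt.coe_sub]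

instance padicIntBoundedSMul : IsBoundedSMul ℤ_[p] ℚ_[p] :=
  IsBoundedSMul.of_norm_smul_le fun r x => by
    rw [Algebra.smul_def, norm_mul]
    rfl

lemma vanish (B : ℕ → C(ℤ_[p], ℤ_[p])) (hBc : ∀ n x, B n x = Ring.choose x n)
    (ν : C(ℤ_[p], ℤ_[p]) →L[ℤ_[p]] ℤ_[p]) (hν : ∀ n, ν (B n) = 0) (f : C(ℤ_[p], ℤ_[p])) :
    ν f = 0 := by
  set a : ℕ → ℤ_[p] := fun n => (fwdDiff (1:ℤ_[p]))^[n] (⇑f) 0 with ha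
  set S : ℕ → C(ℤ_[p], ℤ_[p]) := fun N => ∑ n ∈ Finset.range N, a n • B n with hS
  have hsum := PadicInt.hasSum_mahler (iotaC p f)
  have htend := hsum.tendsto_sum_nat
  have hιS : ∀ N, iotaC p (S N)
      = ∑ n ∈ Finset.range N, PadicInt.mahlerTerm ((fwdDiff (1:ℤ_[p]))^[n] (⇑(iotaC p f)) 0) n := by
    intro N
    ext x
    show ((S N x : ℤ_[p]) : ℚ_[p]) = _
    rw [ContinuousMap.sum_apply, ContinuousMap.sum_apply, coe_finset_sum]
    refine Finset.sum_congr rfl fun n _ => ?_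
    have hf : ⇑(iotaC p f) = fun y => ((f y : ℤ_[p]) : ℚ_[p]) := rfl
    rw [PadicInt.mahlerTerm_apply, hf, fwdDiff_coe', mahler_apply]
    rw [ContinuousMap.smul_apply, smul_eq_mul, Algebra.smul_def, hBc n x]
    change _ = ((Ring.choose x n : ℤ_[p]) : ℚ_[p]) * _
    push_cast
    ring
  have htend2 : Tendsto (fun N => ‖S N - f‖) atTop (𝓝 0) := by
    have h1 : Tendsto (fun N => ‖iotaC p (S N) - iotaC p f‖) atTop (𝓝 0) := by
      simp only [hιS]
      exact (tendsto_iff_norm_sub_tendsto_zero).mp htend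
    have h2 : ∀ N, ‖S N - f‖ = ‖iotaC p (S N) - iotaC p f‖ := fun N => by
      rw [← iotaC_sub, iotaC_norm]
    simpa only [h2] using h1
  have htend3 : Tendsto S atTop (𝓝 f) := tendsto_iff_norm_sub_tendsto_zero.mpr htend2
  have hν0 : ∀ N, ν (S N) = 0 := by
    intro N
    rw [hS]
    simp only [map_sum, map_smul, hν, smul_zero, Finset.sum_const_zero]
  have := (ν.continuous.tendsto f).comp htend3
  simp only [Function.comp_def, hν0, tendsto_const_nhds_iff] at this
  exact this.symm

open Classical in
noncomputable def extQ (c : C(ℤ_[p], ℤ_[p])) : ℤ_[p] → ℤ_[p] :=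
  fun x => if h : (p:ℤ_[p]) ∣ x then c h.choose else 0

lemma hp_ne_zero : (p : ℤ_[p]) ≠ 0 :=
  Nat.cast_ne_zero.mpr (Fact.out (p := p.Prime)).ne_zero

lemma extQ_mul (c : C(ℤ_[p], ℤ_[p])) (y : ℤ_[p]) : extQ p c ((p:ℤ_[p]) * y) = c y := by
  have h : (p:ℤ_[p]) ∣ (p:ℤ_[p]) * y := Dvd.intro y rfl
  rw [extQ]
  rw [dif_pos h]
  exact congrArg c (mul_left_cancel₀ (hp_ne_zero p) h.choose_spec.symm)

lemma extQ_not (c : C(ℤ_[p], ℤ_[p])) (x : ℤ_[p]) (hx : ¬(p:ℤ_[p]) ∣ x) : extQ p c x = 0 := by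
  rw [extQ]
  rw [dif_neg hx]

lemma not_dvd_iff_norm (x : ℤ_[p]) : ¬(p:ℤ_[p]) ∣ x ↔ ((p:ℝ)⁻¹ < ‖x‖) := by
  rw [← PadicInt.norm_lt_one_iff_dvd, not_lt]
  constructor
  · intro h
    calc ((p:ℝ)⁻¹) < 1 := by
          rw [inv_lt_one_iff₀]
          right
          exact_mod_cast (Fact.out (p := p.Prime)).one_lt
      _ ≤ ‖x‖ := h
  · intro h
    by_contra hlt
    rw [not_le] at hlt
    obtain ⟨z, hz⟩ := PadicInt.norm_lt_one_iff_dvd x |>.mp hlt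
    rw [hz, norm_mul, PadicInt.norm_p] at h
    have : ‖z‖ ≤ 1 := PadicInt.norm_le_one z
    nlinarith [norm_nonneg z, inv_pos.mpr (show (0:ℝ) < p from by exact_mod_cast (Fact.out (p := p.Prime)).pos)]

lemma continuous_extQ (c : C(ℤ_[p], ℤ_[p])) : Continuous (extQ p c) := by
  have hp1 : (0:ℝ) < (p:ℝ)⁻¹ :=
    inv_pos.mpr (by exact_mod_cast (Fact.out (p := p.Prime)).pos)
  rw [continuous_iff_continuousAt]
  intro x₀
  by_cases h0 : (p:ℤ_[p]) ∣ x₀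
  · obtain ⟨y₀, rfl⟩ := h0
    rw [Metric.continuousAt_iff]
    intro ε hε
    obtain ⟨δ, hδ, hc⟩ := Metric.continuous_iff.mp c.continuous y₀ ε hε
    refine ⟨min ((p:ℝ)⁻¹ * δ) ((p:ℝ)⁻¹), lt_min (by positivity) hp1, fun x hx => ?_⟩
    have hxn : ‖x - (p:ℤ_[p]) * y₀‖ < min ((p:ℝ)⁻¹ * δ) ((p:ℝ)⁻¹) := by
      rw [← dist_eq_norm]; exact hx
    have hx1 : ‖x - (p:ℤ_[p]) * y₀‖ < (p:ℝ)⁻¹ * δ :=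
      lt_of_lt_of_le hxn (min_le_left _ _)
    have hx2 : ‖x - (p:ℤ_[p]) * y₀‖ < 1 := by
      calc ‖x - (p:ℤ_[p]) * y₀‖ < (p:ℝ)⁻¹ := lt_of_lt_of_le hxn (min_le_right _ _)
        _ < 1 := by
            rw [inv_lt_one_iff₀]; right
            exact_mod_cast (Fact.out (p := p.Prime)).one_lt
    obtain ⟨z, hz⟩ := (PadicInt.norm_lt_one_iff_dvd _).mp hx2
    have hx' : x = (p:ℤ_[p]) * (y₀ + z) := by rw [mul_add, ← hz]; ring
    rw [hx', extQ_mul, extQ_mul]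
    apply hc
    have hznorm : ‖z‖ < δ := by
      have h1 : ‖x - (p:ℤ_[p]) * y₀‖ = (p:ℝ)⁻¹ * ‖z‖ := by
        rw [hz, norm_mul, PadicInt.norm_p]
      rw [h1] at hx1
      have := (mul_lt_mul_iff_right₀ hp1).mp hx1
      exact this
    calc dist (y₀ + z) y₀ = ‖z‖ := by rw [dist_eq_norm]; congr 1; ring
      _ < δ := hznorm
  · have hopen : IsOpen {x : ℤ_[p] | ¬(p:ℤ_[p]) ∣ x} := by
      have : {x : ℤ_[p] | ¬(p:ℤ_[p]) ∣ x} = (fun x : ℤ_[p] => ‖x‖) ⁻¹' Set.Ioi ((p:ℝ)⁻¹) := by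
        ext x; exact not_dvd_iff_norm p x
      rw [this]
      exact isOpen_Ioi.preimage continuous_norm
    have hev : extQ p c =ᶠ[nhds x₀] (fun _ => (0:ℤ_[p])) :=
      Filter.eventually_of_mem (hopen.mem_nhds h0) (fun x hx => extQ_not p c x hx)
    exact ContinuousAt.congr continuousAt_const hev.symm


/-- **A measure is supported on `ℤ_p^×` iff `ψ(A_μ) = 0`.**
Let `μ` be a `ℤ_p`-valued measure on `ℤ_p`, with Mahler transform
`A_μ(T) = Σ_n (μ(C(x,n))) T^n` (where `B n` is the binomial coefficient function `C(x,n)`),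
and let `Ψ` denote the trace operator `ψ` on measures (so that `ψ(A_μ) = A_{Ψμ}`).
Then `μ` is supported on `ℤ_p^×`, i.e. `Res_{ℤ_p^×}(μ) = μ`, if and only if `ψ(A_μ) = 0`,
i.e. all Mahler coefficients `Ψμ(C(x,n))` vanish. -/
theorem supported_on_units_iff_psi_eq_zero
    (B : ℕ → C(ℤ_[p], ℤ_[p]))
    (hB : ∀ (n : ℕ) (x : ℤ_[p]),
      (n.factorial : ℤ_[p]) * B n x = ∏ i ∈ Finset.range n, (x - (i : ℤ_[p])))
    (Ψ : (C(ℤ_[p], ℤ_[p]) →L[ℤ_[p]] ℤ_[p]) → (C(ℤ_[p], ℤ_[p]) →L[ℤ_[p]] ℤ_[p]))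
    (hΨ : ∀ μ (f g : C(ℤ_[p], ℤ_[p])),
      (∀ y : ℤ_[p], g ((p : ℤ_[p]) * y) = f y) →
      (∀ x : ℤ_[p], ¬ (p : ℤ_[p]) ∣ x → g x = 0) →
      Ψ μ f = μ g)
    (μ : C(ℤ_[p], ℤ_[p]) →L[ℤ_[p]] ℤ_[p]) :
    (∀ (f h : C(ℤ_[p], ℤ_[p])),
      (∀ x : ℤ_[p], ¬ (p : ℤ_[p]) ∣ x → h x = f x) →
      (∀ x : ℤ_[p], (p : ℤ_[p]) ∣ x → h x = 0) →
      μ f = μ h) ↔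
    PowerSeries.mk (fun n => Ψ μ (B n)) = 0 := by
  constructor
  · intro hsupp
    refine PowerSeries.ext fun n => ?_
    rw [PowerSeries.coeff_mk, map_zero]
    set g : C(ℤ_[p], ℤ_[p]) := ⟨extQ p (B n), continuous_extQ p (B n)⟩ with hgdef
    have hg := hΨ μ (B n) g (fun y => extQ_mul p (B n) y)
      (fun x hx => extQ_not p (B n) x hx)
    rw [hg]
    have h0 := hsupp g 0 (fun x hx => (extQ_not p (B n) x hx).symm) (fun x _ => rfl)
    rw [h0, map_zero]
  · intro hzero f h hfh hh0
    have hcoeff : ∀ n, Ψ μ (B n) = 0 := fun n => by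
      have := congrArg (PowerSeries.coeff n) hzero
      rwa [PowerSeries.coeff_mk, map_zero] at this
    have hvan := vanish p B (B_eq_choose p B hB) (Ψ μ) hcoeff
    set m : C(ℤ_[p], ℤ_[p]) := ⟨fun y => (p:ℤ_[p]) * y, continuous_const.mul continuous_id⟩
      with hm
    have hkey := hΨ μ (f.comp m) (f - h)
      (fun y => by
        have hdvd : (p:ℤ_[p]) ∣ (p:ℤ_[p]) * y := Dvd.intro y rfl
        simp only [ContinuousMap.sub_apply, ContinuousMap.comp_apply, hm,
          ContinuousMap.coe_mk]
        rw [hh0 _ hdvd, sub_zero])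
      (fun x hx => by
        simp only [ContinuousMap.sub_apply]
        rw [hfh x hx, sub_self])
    have hz : μ (f - h) = 0 := by rw [← hkey]; exact hvan (f.comp m)
    rw [map_sub] at hz
    exact sub_eq_zero.mp hz
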